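/- Let λ ∈ ℂ with Re λ > 0 and let f : [0,1] → ℂ be continuous. If q₁ and q₂ are both continuous complex-valued functions on [0,1] that are continuously differentiable on (0,1) and satisfy −w(r)q'(r) − λ·q(r) = f(r) for all r ∈ (0,1), then q₁ = q₂. (Any two solutions differ by a multiple of e^{−λ∫_{r₀}^r dρ/w(ρ)}, which is unbounded as r → 1⁻ unless the multiple is zero.) -/

import Mathlib

/- STATEMENT 13: Let Re λ > 0 and f : [0,1] → ℂ continuous. If q₁ and q₂ are continuous
on [0,1], continuously differentiable on (0,1), and both satisfy
−w(r)q'(r) − λq(r) = f(r) on (0,1), then q₁ = q₂ on [0,1]. -/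
theorem stmt_13
    (w : ℝ → ℝ) (C₁ C₂ : ℝ) (hC₁ : 0 < C₁) (hC₂ : 0 < C₂)
    (hw : ContDiffOn ℝ 1 w (Set.Icc 0 1))
    (hw_lb : ∀ r ∈ Set.Icc (0:ℝ) 1, -C₁ * (r * (1 - r)) ≤ w r)
    (hw_ub : ∀ r ∈ Set.Icc (0:ℝ) 1, w r ≤ -C₂ * (r * (1 - r)))
    (lam : ℂ) (hlam : 0 < lam.re)
    (f : ℝ → ℂ) (hf : ContinuousOn f (Set.Icc 0 1))
    (q₁ q₂ q₁' q₂' : ℝ → ℂ)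
    (hq₁_cont : ContinuousOn q₁ (Set.Icc 0 1))
    (hq₂_cont : ContinuousOn q₂ (Set.Icc 0 1))
    (hq₁_deriv : ∀ r ∈ Set.Ioo (0:ℝ) 1, HasDerivAt q₁ (q₁' r) r)
    (hq₂_deriv : ∀ r ∈ Set.Ioo (0:ℝ) 1, HasDerivAt q₂ (q₂' r) r)
    (hq₁'_cont : ContinuousOn q₁' (Set.Ioo 0 1))
    (hq₂'_cont : ContinuousOn q₂' (Set.Ioo 0 1))
    (hode₁ : ∀ r ∈ Set.Ioo (0:ℝ) 1, -(w r : ℂ) * q₁' r - lam * q₁ r = f r)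
    (hode₂ : ∀ r ∈ Set.Ioo (0:ℝ) 1, -(w r : ℂ) * q₂' r - lam * q₂ r = f r) :
    Set.EqOn q₁ q₂ (Set.Icc 0 1) := by
  set g : ℝ → ℂ := fun r => q₁ r - q₂ r with hg_def
  set g' : ℝ → ℂ := fun r => q₁' r - q₂' r with hg'_def
  -- w is negative on (0,1)
  have hwneg : ∀ r ∈ Set.Ioo (0:ℝ) 1, w r < 0 := by
    intro r hr
    have h1 := hw_ub r (Set.Ioo_subset_Icc_self hr)
    have h2 : 0 < r * (1 - r) := mul_pos hr.1 (by linarith [hr.2])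
    nlinarith
  have hgd : ∀ r ∈ Set.Ioo (0:ℝ) 1, HasDerivAt g (g' r) r :=
    fun r hr => (hq₁_deriv r hr).sub (hq₂_deriv r hr)
  -- the homogeneous ODE for g
  have key : ∀ r ∈ Set.Ioo (0:ℝ) 1, (w r : ℂ) * g' r = -(lam * g r) := by
    intro r hr
    have h1 := hode₁ r hr
    have h2 := hode₂ r hr
    simp only [hg_def, hg'_def]
    linear_combination h2 - h1
  -- φ = |g|²
  set φ : ℝ → ℝ := fun r => (g r).re ^ 2 + (g r).im ^ 2 with hφ_def
  have hφ_nonneg : ∀ r, 0 ≤ φ r := fun r => by positivity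
  set φ' : ℝ → ℝ := fun r => 2 * (g r).re * (g' r).re + 2 * (g r).im * (g' r).im with hφ'_def
  have hgre : ∀ r ∈ Set.Ioo (0:ℝ) 1, HasDerivAt (fun s => (g s).re) ((g' r).re) r := by
    intro r hr
    exact (Complex.reCLM.hasFDerivAt.comp_hasDerivAt r (hgd r hr))
  have hgim : ∀ r ∈ Set.Ioo (0:ℝ) 1, HasDerivAt (fun s => (g s).im) ((g' r).im) r := by
    intro r hr
    exact (Complex.imCLM.hasFDerivAt.comp_hasDerivAt r (hgd r hr))
  have hφd : ∀ r ∈ Set.Ioo (0:ℝ) 1, HasDerivAt φ (φ' r) r := by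
    intro r hr
    have := (((hgre r hr).mul (hgre r hr)).add ((hgim r hr).mul (hgim r hr)))
    convert this using 1 <;> first
      | (ext s; simp [hφ_def]; try ring)
      | (simp [hφ'_def]; ring)
      | rfl
  -- φ' r = (-2 Re λ / w r) * φ r
  have hφ'_eq : ∀ r ∈ Set.Ioo (0:ℝ) 1, φ' r = (-2 * lam.re / w r) * φ r := by
    intro r hr
    have hk := key r hr
    have hre : w r * (g' r).re = -(lam.re * (g r).re - lam.im * (g r).im) := by
      have := congrArg Complex.re hk
      simpa [Complex.mul_re] using this
    have him : w r * (g' r).im = -(lam.re * (g r).im + lam.im * (g r).re) := by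
      have := congrArg Complex.im hk
      simpa [Complex.mul_im] using this
    have hw0 : w r ≠ 0 := (hwneg r hr).ne
    field_simp [hφ'_def, hφ_def]
    linear_combination 2 * (g r).re * hre + 2 * (g r).im * him
  -- K and u
  set K : ℝ := 2 * lam.re / C₁ with hK_def
  have hK : 0 < K := by positivity
  set u : ℝ → ℝ := fun r => φ r * (1 - r) ^ K with hu_def
  set u' : ℝ → ℝ := fun r => φ' r * (1 - r) ^ K + φ r * (K * (1 - r) ^ (K - 1) * (-1)) with hu'_def
  have hud : ∀ r ∈ Set.Ioo (0:ℝ) 1, HasDerivAt u (u' r) r := by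
    intro r hr
    have h1r : (0:ℝ) < 1 - r := by linarith [hr.2]
    have hrpow : HasDerivAt (fun s : ℝ => (1 - s) ^ K) (K * (1 - r) ^ (K - 1) * (-1)) r := by
      have hbase : HasDerivAt (fun s : ℝ => 1 - s) (-1) r := by
        simpa using (hasDerivAt_id r).const_sub 1
      exact (Real.hasDerivAt_rpow_const (Or.inl h1r.ne')).comp r hbase
    exact (hφd r hr).mul hrpow
  have hu'_nonneg : ∀ r ∈ Set.Ioo (0:ℝ) 1, 0 ≤ u' r := by
    intro r hr
    have h1r : (0:ℝ) < 1 - r := by linarith [hr.2]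
    have hwn := hwneg r hr
    have hlb := hw_lb r (Set.Ioo_subset_Icc_self hr)
    -- -w r ≤ C₁ (1-r)
    have hle : -w r ≤ C₁ * (1 - r) := by nlinarith [hr.1, hr.2]
    -- a (1-r) ≥ K where a = -2 lam.re / w r
    have hwp : (0:ℝ) < -w r := neg_pos.mpr hwn
    have hw0 : w r ≠ 0 := hwn.ne
    have ha : K ≤ (-2 * lam.re / w r) * (1 - r) := by
      have heq : (-2 * lam.re / w r) * (1 - r) = 2 * lam.re * (1 - r) / (-w r) := by
        field_simp
      rw [heq, hK_def, div_le_div_iff₀ hC₁ hwp]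
      nlinarith
    have hsplit : (1 - r) ^ K = (1 - r) ^ (K - 1) * (1 - r) := by
      rw [← Real.rpow_add_one h1r.ne' (K - 1)]
      ring_nf
    have hpow_nonneg : 0 ≤ (1 - r) ^ (K - 1) := Real.rpow_nonneg h1r.le _
    have : u' r = (1 - r) ^ (K - 1) * (φ r * ((-2 * lam.re / w r) * (1 - r) - K)) := by
      rw [hu'_def]
      simp only [hφ'_eq r hr, hsplit]
      ring
    rw [this]
    have : 0 ≤ (-2 * lam.re / w r) * (1 - r) - K := by linarith
    positivity
  -- u is monotone on (0,1)
  have humono : MonotoneOn u (Set.Ioo 0 1) := by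
    apply monotoneOn_of_deriv_nonneg (convex_Ioo 0 1)
    · exact fun r hr => ((hud r hr).continuousAt).continuousWithinAt
    · intro r hr
      rw [interior_Ioo] at hr
      exact (hud r hr).differentiableAt.differentiableWithinAt
    · intro r hr
      rw [interior_Ioo] at hr
      rw [(hud r hr).deriv]
      exact hu'_nonneg r hr
  -- φ bounded on [0,1]
  have hg_cont : ContinuousOn g (Set.Icc 0 1) := hq₁_cont.sub hq₂_cont
  have hφ_cont : ContinuousOn φ (Set.Icc 0 1) := by
    apply ContinuousOn.add
    · exact ((Complex.continuous_re.comp_continuousOn hg_cont).pow 2)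
    · exact ((Complex.continuous_im.comp_continuousOn hg_cont).pow 2)
  obtain ⟨M, hM⟩ : ∃ M, ∀ r ∈ Set.Icc (0:ℝ) 1, φ r ≤ M := by
    obtain ⟨x, hx, hmax⟩ := (isCompact_Icc).exists_isMaxOn (Set.nonempty_Icc.mpr zero_le_one) hφ_cont
    exact ⟨φ x, hmax⟩
  -- φ = 0 on (0,1)
  have hφ_zero : ∀ r ∈ Set.Ioo (0:ℝ) 1, φ r = 0 := by
    intro r₀ hr₀
    by_contra hne
    have hpos : 0 < φ r₀ := lt_of_le_of_ne (hφ_nonneg r₀) (Ne.symm hne)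
    set c : ℝ := φ r₀ * (1 - r₀) ^ K with hc_def
    have h1r₀ : (0:ℝ) < 1 - r₀ := by linarith [hr₀.2]
    have hc : 0 < c := by
      have := Real.rpow_pos_of_pos h1r₀ K
      positivity
    -- eventually M (1-r)^K < c near 1⁻
    have htend : Filter.Tendsto (fun r : ℝ => M * (1 - r) ^ K) (nhdsWithin 1 (Set.Iio 1)) (nhds 0) := by
      have h1 : Filter.Tendsto (fun r : ℝ => 1 - r) (nhdsWithin 1 (Set.Iio 1)) (nhdsWithin 0 (Set.Ioi 0)) := by
        apply tendsto_nhdsWithin_of_tendsto_nhds_of_eventually_within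
        · have hcont : Continuous (fun r : ℝ => 1 - r) := continuous_const.sub continuous_id
          have h0 : Filter.Tendsto (fun r : ℝ => 1 - r) (nhds 1) (nhds (1 - 1)) :=
            hcont.tendsto (1:ℝ)
          rw [sub_self] at h0
          exact h0.mono_left nhdsWithin_le_nhds
        · filter_upwards [self_mem_nhdsWithin] with r hr
          simp only [Set.mem_Iio] at hr
          simp only [Set.mem_Ioi]
          linarith
      have h2 : Filter.Tendsto (fun t : ℝ => t ^ K) (nhdsWithin 0 (Set.Ioi 0)) (nhds 0) := by
        have := (Real.continuousAt_rpow_const 0 K (Or.inr hK.le)).tendsto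
        rw [Real.zero_rpow hK.ne'] at this
        exact this.mono_left nhdsWithin_le_nhds
      have := (h2.comp h1).const_mul M
      simpa using this
    have hev1 : ∀ᶠ r in nhdsWithin 1 (Set.Iio 1), M * (1 - r) ^ K < c :=
      htend.eventually (gt_mem_nhds hc)
    have hev2 : ∀ᶠ r in nhdsWithin 1 (Set.Iio 1), r ∈ Set.Ioo r₀ 1 :=
      Ioo_mem_nhdsLT hr₀.2
    obtain ⟨r, hr1, hr2⟩ := (hev1.and hev2).exists
    have hrIoo : r ∈ Set.Ioo (0:ℝ) 1 := ⟨lt_trans hr₀.1 hr2.1, hr2.2⟩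
    have hmono := humono hr₀ hrIoo (le_of_lt hr2.1)
    have h1r : (0:ℝ) < 1 - r := by linarith [hr2.2]
    have hMk : φ r * (1 - r) ^ K ≤ M * (1 - r) ^ K := by
      apply mul_le_mul_of_nonneg_right (hM r (Set.Ioo_subset_Icc_self hrIoo))
      exact Real.rpow_nonneg h1r.le _
    have : c ≤ M * (1 - r) ^ K := le_trans hmono hMk
    linarith
  -- g = 0 on (0,1)
  have hEqIoo : ∀ r ∈ Set.Ioo (0:ℝ) 1, q₁ r = q₂ r := by
    intro r hr
    have h := hφ_zero r hr
    simp only [hφ_def] at h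
    have hre : (g r).re = 0 := by
      have h2 : (g r).re ^ 2 = 0 :=
        le_antisymm (by nlinarith [sq_nonneg (g r).im]) (by positivity)
      exact pow_eq_zero_iff two_ne_zero |>.mp h2
    have him : (g r).im = 0 := by
      have h2 : (g r).im ^ 2 = 0 :=
        le_antisymm (by nlinarith [sq_nonneg (g r).re]) (by positivity)
      exact pow_eq_zero_iff two_ne_zero |>.mp h2
    have hg0 : q₁ r - q₂ r = 0 := Complex.ext hre him
    exact sub_eq_zero.mp hg0
  -- extend to the closed interval by continuity
  intro r hr
  rcases eq_or_lt_of_le hr.1 with h0 | h0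
  · -- r = 0
    subst h0
    have hmem : (0:ℝ) ∈ closure (Set.Ioo (0:ℝ) 1) := by
      rw [closure_Ioo (by norm_num : (0:ℝ) ≠ 1)]
      exact Set.left_mem_Icc.mpr zero_le_one
    have hne : (nhdsWithin (0:ℝ) (Set.Ioo 0 1)).NeBot :=
      mem_closure_iff_nhdsWithin_neBot.mp hmem
    have t1 : Filter.Tendsto q₁ (nhdsWithin (0:ℝ) (Set.Ioo 0 1)) (nhds (q₁ 0)) :=
      (hq₁_cont 0 (Set.left_mem_Icc.mpr zero_le_one)).mono_left
        (nhdsWithin_mono _ Set.Ioo_subset_Icc_self)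
    have t2 : Filter.Tendsto q₂ (nhdsWithin (0:ℝ) (Set.Ioo 0 1)) (nhds (q₂ 0)) :=
      (hq₂_cont 0 (Set.left_mem_Icc.mpr zero_le_one)).mono_left
        (nhdsWithin_mono _ Set.Ioo_subset_Icc_self)
    have hev : q₂ =ᶠ[nhdsWithin (0:ℝ) (Set.Ioo 0 1)] q₁ := by
      filter_upwards [self_mem_nhdsWithin] with s hs
      exact (hEqIoo s hs).symm
    exact tendsto_nhds_unique t1 (t2.congr' hev)
  rcases eq_or_lt_of_le hr.2 with h1 | h1
  · -- r = 1
    subst h1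
    have hmem : (1:ℝ) ∈ closure (Set.Ioo (0:ℝ) 1) := by
      rw [closure_Ioo (by norm_num : (0:ℝ) ≠ 1)]
      exact Set.right_mem_Icc.mpr zero_le_one
    have hne : (nhdsWithin (1:ℝ) (Set.Ioo 0 1)).NeBot :=
      mem_closure_iff_nhdsWithin_neBot.mp hmem
    have t1 : Filter.Tendsto q₁ (nhdsWithin (1:ℝ) (Set.Ioo 0 1)) (nhds (q₁ 1)) :=
      (hq₁_cont 1 (Set.right_mem_Icc.mpr zero_le_one)).mono_left
        (nhdsWithin_mono _ Set.Ioo_subset_Icc_self)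
    have t2 : Filter.Tendsto q₂ (nhdsWithin (1:ℝ) (Set.Ioo 0 1)) (nhds (q₂ 1)) :=
      (hq₂_cont 1 (Set.right_mem_Icc.mpr zero_le_one)).mono_left
        (nhdsWithin_mono _ Set.Ioo_subset_Icc_self)
    have hev : q₂ =ᶠ[nhdsWithin (1:ℝ) (Set.Ioo 0 1)] q₁ := by
      filter_upwards [self_mem_nhdsWithin] with s hs
      exact (hEqIoo s hs).symm
    exact tendsto_nhds_unique t1 (t2.congr' hev)
  · exact hEqIoo r ⟨h0, h1⟩
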